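/- arXiv:2110.02162 — 2 statements merged into one kernel-verified Lean document; each statement's English description precedes it below -/
import Mathlib

section
/- Let B_4 be the braid group on 4 strands. If G is a finite group and f : B_4 → G is a surjective group homomorphism with G not cyclic, then 6 ≤ Nat.card G, and if Nat.card G = 6 then G is isomorphic to the symmetric group S_3 = Equiv.Perm (Fin 3). -/
/-- The braid relations on `n` strands, as elements of the free group on
`n - 1` generators (generator `i` corresponds to the half twist `σ_{i+1}`
in the usual 1-indexed notation). -/
def braidRels (n : ℕ) : Set (FreeGroup (Fin (n - 1))) :=
  { r | (∃ i j : Fin (n - 1), (j : ℕ) = (i : ℕ) + 1 ∧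
          r = FreeGroup.of i * FreeGroup.of j * FreeGroup.of i *
              (FreeGroup.of j * FreeGroup.of i * FreeGroup.of j)⁻¹) ∨
        (∃ i j : Fin (n - 1), (i : ℕ) + 2 ≤ (j : ℕ) ∧
          r = FreeGroup.of i * FreeGroup.of j * (FreeGroup.of j * FreeGroup.of i)⁻¹) }

/-- The braid group on `n` strands, presented by the Artin generators and the
braid and far-commutation relations. -/
def BraidGroup (n : ℕ) : Type := PresentedGroup (braidRels n)

instance (n : ℕ) : Group (BraidGroup n) :=
  inferInstanceAs (Group (PresentedGroup (braidRels n)))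

/-- The Artin generator `σ_k` (1-indexed, so `1 ≤ k ≤ n - 1`) of the braid group
`B_n`.  Out-of-range indices give the junk value `1`. -/
def braidGen (n k : ℕ) : BraidGroup n :=
  if h : k - 1 < n - 1 then PresentedGroup.of (⟨k - 1, h⟩ : Fin (n - 1)) else 1

/-- The transpositions corresponding to the Artin generators. -/
def braidPermGen (n : ℕ) (i : Fin (n - 1)) : Equiv.Perm (Fin n) :=
  Equiv.swap ⟨(i : ℕ), by have := i.isLt; omega⟩ ⟨(i : ℕ) + 1, by have := i.isLt; omega⟩

theorem braidPermGen_rels (n : ℕ) :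
    ∀ r ∈ braidRels n, FreeGroup.lift (braidPermGen n) r = 1 := by
  rintro r (⟨i, j, hij, rfl⟩ | ⟨i, j, hij, rfl⟩) <;>
    simp only [map_mul, map_inv, FreeGroup.lift_apply_of, mul_inv_eq_one]
  · -- braid relation
    have hi := i.isLt
    have hj := j.isLt
    unfold braidPermGen
    set a : Fin n := ⟨(i : ℕ), by omega⟩
    set b : Fin n := ⟨(i : ℕ) + 1, by omega⟩
    set c : Fin n := ⟨(j : ℕ) + 1, by omega⟩
    have hb : (⟨(j : ℕ), by omega⟩ : Fin n) = b := by simp [b, Fin.ext_iff, hij]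
    rw [hb]
    have hab : a ≠ b := by simp [a, b, Fin.ext_iff]
    have hac : a ≠ c := by simp [a, c, Fin.ext_iff]; omega
    have hbc : b ≠ c := by simp [b, c, Fin.ext_iff]; omega
    have h1 : Equiv.swap b c * Equiv.swap a b * Equiv.swap b c = Equiv.swap c a :=
      Equiv.swap_mul_swap_mul_swap hab hac
    have h2 : Equiv.swap b a * Equiv.swap c b * Equiv.swap b a = Equiv.swap a c :=
      Equiv.swap_mul_swap_mul_swap hbc.symm hac.symm
    rw [Equiv.swap_comm b a, Equiv.swap_comm c b] at h2
    rw [h1, h2, Equiv.swap_comm c a]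
  · -- far commutation
    have hi := i.isLt
    have hj := j.isLt
    unfold braidPermGen
    set a : Fin n := ⟨(i : ℕ), by omega⟩
    set b : Fin n := ⟨(i : ℕ) + 1, by omega⟩
    set c : Fin n := ⟨(j : ℕ), by omega⟩
    set d : Fin n := ⟨(j : ℕ) + 1, by omega⟩
    have hdisj : (Equiv.swap a b).Disjoint (Equiv.swap c d) := by
      intro x
      by_cases hx : x = a ∨ x = b
      · right
        rcases hx with rfl | rfl <;>
          exact Equiv.swap_apply_of_ne_of_ne
            (by simp [a, b, c, d, Fin.ext_iff]; omega)
            (by simp [a, b, c, d, Fin.ext_iff]; omega)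
      · left
        push_neg at hx
        exact Equiv.swap_apply_of_ne_of_ne hx.1 hx.2
    exact hdisj.commute

/-- The natural projection `π : B_n → S_n`, sending the Artin generator `σ_i`
to the adjacent transposition `(i, i+1)`. -/
def braidPi (n : ℕ) : BraidGroup n →* Equiv.Perm (Fin n) :=
  PresentedGroup.toGroup (braidPermGen_rels n)


section Aux

open Subgroup

/-- Relations hold in a presented group. -/
theorem presented_rel {α : Type*} {rels : Set (FreeGroup α)} {r : FreeGroup α} (h : r ∈ rels) :
    PresentedGroup.mk rels r = 1 :=
  (QuotientGroup.eq_one_iff r).mpr (Subgroup.subset_normalClosure h)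

/-- `Equiv.permCongr` as a `MulEquiv`. -/
def permCongrMulEquiv {α β : Type*} (e : α ≃ β) : Equiv.Perm α ≃* Equiv.Perm β :=
  { e.permCongr with
    map_mul' := fun p q => Equiv.ext fun x => by simp [Equiv.permCongr_def] }

/-- The images of the three Artin generators of `B₄` satisfy the braid relations. -/
theorem braid_gen_rels {G : Type*} [Group G] (f : BraidGroup 4 →* G) :
    (f (PresentedGroup.of 0) * f (PresentedGroup.of 1) * f (PresentedGroup.of 0)
      = f (PresentedGroup.of 1) * f (PresentedGroup.of 0) * f (PresentedGroup.of 1)) ∧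
    (f (PresentedGroup.of 1) * f (PresentedGroup.of 2) * f (PresentedGroup.of 1)
      = f (PresentedGroup.of 2) * f (PresentedGroup.of 1) * f (PresentedGroup.of 2)) := by
  have key : ∀ r ∈ braidRels 4,
      (f.comp (PresentedGroup.mk (braidRels 4))) r = 1 := by
    intro r hr
    show f (PresentedGroup.mk (braidRels 4) r) = 1
    rw [presented_rel hr]
    exact map_one f
  constructor
  · have h := key _ (Or.inl ⟨(0 : Fin 3), (1 : Fin 3), by decide, rfl⟩)
    simp only [map_mul, map_inv, mul_inv_eq_one] at h
    exact h
  · have h := key _ (Or.inl ⟨(1 : Fin 3), (2 : Fin 3), by decide, rfl⟩)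
    simp only [map_mul, map_inv, mul_inv_eq_one] at h
    exact h

/-- Any commutative quotient of `B₄` is cyclic. -/
theorem braid_comm_cyclic {G : Type*} [Group G] (f : BraidGroup 4 →* G)
    (hf : Function.Surjective f) (hc : ∀ x y : G, x * y = y * x) : IsCyclic G := by
  obtain ⟨h1, h2⟩ := braid_gen_rels f
  set a := f (PresentedGroup.of 0) with ha
  set b := f (PresentedGroup.of 1) with hb
  set c := f (PresentedGroup.of 2) with hcc
  have hab : a = b := by
    have h1' : a * b * a = a * b * b := by rw [h1, hc b a]
    exact mul_left_cancel h1'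
  have hbc : b = c := by
    have h2' : b * c * b = b * c * c := by rw [h2, hc c b]
    exact mul_left_cancel h2'
  have htop : Subgroup.closure (Set.range fun i : Fin 3 => f (PresentedGroup.of i)) = ⊤ := by
    have h0 : (Set.range fun i : Fin 3 => f (PresentedGroup.of i))
        = f '' Set.range (PresentedGroup.of (rels := braidRels 4)) := by
      ext x; constructor
      · rintro ⟨i, rfl⟩; exact ⟨_, ⟨i, rfl⟩, rfl⟩
      · rintro ⟨_, ⟨i, rfl⟩, rfl⟩; exact ⟨i, rfl⟩
    rw [h0, ← MonoidHom.map_closure]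
    erw [PresentedGroup.closure_range_of]
    exact (MonoidHom.range_eq_map f).symm.trans (MonoidHom.range_eq_top.2 hf)
  refine ⟨⟨a, fun x => ?_⟩⟩
  have hle : Subgroup.closure (Set.range fun i : Fin 3 => f (PresentedGroup.of i))
      ≤ Subgroup.zpowers a := by
    rw [Subgroup.closure_le]
    rintro _ ⟨i, rfl⟩
    fin_cases i
    · exact Subgroup.mem_zpowers _
    · exact ⟨1, by simp only [zpow_one]; exact hab⟩
    · exact ⟨1, by simp only [zpow_one]; exact hab.trans hbc⟩
  exact hle (htop ▸ Subgroup.mem_top x)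

end Aux

/-- The smallest non-cyclic quotient of `B_4` has order at least `6`, and any
non-cyclic quotient of order `6` is isomorphic to `S_3`. -/
theorem braid_four_smallest_noncyclic_quotient
    (G : Type) [Group G] [Finite G]
    (f : BraidGroup 4 →* G) (hf : Function.Surjective f) (hG : ¬ IsCyclic G) :
    6 ≤ Nat.card G ∧ (Nat.card G = 6 → Nonempty (G ≃* Equiv.Perm (Fin 3))) :=by
  have hcomm_cyc : (∀ x y : G, x * y = y * x) → IsCyclic G := braid_comm_cyclic f hf
  have habel : ¬ ∀ x y : G, x * y = y * x := fun h => hG (hcomm_cyc h)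
  haveI : Fact (Nat.Prime 2) := ⟨Nat.prime_two⟩
  haveI : Fact (Nat.Prime 3) := ⟨by norm_num⟩
  haveI : Fact (Nat.Prime 5) := ⟨by norm_num⟩
  have hpos : 0 < Nat.card G := Nat.card_pos
  have hge : 6 ≤ Nat.card G := by
    by_contra hlt
    push_neg at hlt
    have hcases : Nat.card G = 1 ∨ Nat.card G = 2 ∨ Nat.card G = 3 ∨ Nat.card G = 4 ∨
        Nat.card G = 5 := by omega
    rcases hcases with h | h | h | h | h
    · haveI : Subsingleton G := (Nat.card_eq_one_iff_unique.mp h).1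
      exact hG inferInstance
    · exact hG (isCyclic_of_prime_card h)
    · exact hG (isCyclic_of_prime_card h)
    · exact habel (IsPGroup.commutative_of_card_eq_prime_sq (p := 2) (by rw [h]; norm_num))
    · exact hG (isCyclic_of_prime_card h)
  refine ⟨hge, fun h6 => ?_⟩
  obtain ⟨y, hy⟩ := exists_prime_orderOf_dvd_card' (G := G) 2 (by rw [h6]; norm_num)
  set H := Subgroup.zpowers y with hH
  have hcardH : Nat.card H = 2 := by rw [hH, Nat.card_zpowers, hy]
  have hindexH : H.index = 3 := by
    have hmul := H.card_mul_index
    rw [hcardH, h6] at hmul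
    omega
  have hcore : H.normalCore = ⊥ := by
    by_contra hne
    have hle := H.normalCore_le
    have hdvd : Nat.card H.normalCore ∣ 2 := hcardH ▸ Subgroup.card_dvd_of_le hle
    have hne1 : Nat.card H.normalCore ≠ 1 := fun h1 => hne (Subgroup.card_eq_one.mp h1)
    have h2' : Nat.card H.normalCore = 2 := by
      rcases (Nat.dvd_prime Nat.prime_two).mp hdvd with h' | h'
      · exact absurd h' hne1
      · exact h'
    have heq : H.normalCore = H :=
      Subgroup.eq_of_le_of_card_ge hle (by rw [hcardH, h2'])
    haveI hnorm : H.Normal := heq ▸ H.normalCore_normal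
    have hy1 : y ≠ 1 := by
      intro h'
      rw [h', orderOf_one] at hy
      exact absurd hy (by norm_num)
    have hcentral : y ∈ Subgroup.center G := by
      rw [Subgroup.mem_center_iff]
      intro g
      have hmem : g * y * g⁻¹ ∈ H := hnorm.conj_mem y (Subgroup.mem_zpowers y) g
      obtain ⟨k, hk⟩ := Subgroup.mem_zpowers_iff.mp hmem
      have h2 : y ^ (2 : ℤ) = 1 := by
        have h' := pow_orderOf_eq_one y
        rw [hy] at h'
        exact_mod_cast h'
      have hk2 : y ^ k = y ^ (k % 2) := by
        conv_lhs => rw [← Int.emod_add_mul_ediv k 2]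
        rw [zpow_add, zpow_mul, h2, one_zpow, mul_one]
      rcases Int.emod_two_eq_zero_or_one k with h' | h'
      · rw [hk2, h', zpow_zero] at hk
        exfalso
        apply hy1
        have hid : g⁻¹ * (g * y * g⁻¹) * g = y := by group
        rw [← hk] at hid
        simpa using hid.symm
      · rw [hk2, h', zpow_one] at hk
        have hgy : y * g = (g * y * g⁻¹) * g := by rw [← hk]
        rw [hgy]
        group
    have h2Z : 2 ∣ Nat.card (Subgroup.center G) := by
      rw [← hy]
      exact Subgroup.orderOf_dvd_natCard _ hcentral
    have hZdvd : Nat.card (Subgroup.center G) ∣ 6 := h6 ▸ Subgroup.card_subgroup_dvd_card _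
    have hmul : Nat.card (Subgroup.center G) * (Subgroup.center G).index = 6 :=
      h6 ▸ (Subgroup.center G).card_mul_index
    have hcycQ : IsCyclic (G ⧸ Subgroup.center G) := by
      have hZle : Nat.card (Subgroup.center G) ≤ 6 := Nat.le_of_dvd (by norm_num) hZdvd
      have hZpos : 0 < Nat.card (Subgroup.center G) := Nat.card_pos
      set z := Nat.card (Subgroup.center G) with hz
      interval_cases z
      · omega
      · have hidx : (Subgroup.center G).index = 3 := by omega
        exact isCyclic_of_prime_card ((Subgroup.index_eq_card _).symm.trans hidx)
      · omega
      · omega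
      · omega
      · have hidx : (Subgroup.center G).index = 1 := by omega
        haveI : Subsingleton (G ⧸ Subgroup.center G) :=
          (Nat.card_eq_one_iff_unique.mp ((Subgroup.index_eq_card _).symm.trans hidx)).1
        infer_instance
    exact habel (commutative_of_cyclic_center_quotient (QuotientGroup.mk' _)
      (QuotientGroup.ker_mk' _).le)
  have hker : (MulAction.toPermHom G (G ⧸ H)).ker = ⊥ := by
    rw [← Subgroup.normalCore_eq_ker]
    exact hcore
  have hinj : Function.Injective (MulAction.toPermHom G (G ⧸ H)) :=
    (MulAction.toPermHom G (G ⧸ H)).ker_eq_bot_iff.mp hker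
  have hcardQ : Nat.card (G ⧸ H) = 3 := (Subgroup.index_eq_card H) ▸ hindexH
  let e : (G ⧸ H) ≃ Fin 3 := Finite.equivFinOfCardEq hcardQ
  let ψ : G →* Equiv.Perm (Fin 3) :=
    (permCongrMulEquiv e).toMonoidHom.comp (MulAction.toPermHom G (G ⧸ H))
  have hψinj : Function.Injective ψ := (permCongrMulEquiv e).injective.comp hinj
  have hbij : Function.Bijective ψ := by
    refine (Nat.bijective_iff_injective_and_card ψ).mpr ⟨hψinj, ?_⟩
    rw [h6, Nat.card_eq_fintype_card, Fintype.card_perm, Fintype.card_fin]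
    rfl
  exact ⟨MulEquiv.ofBijective ψ hbij⟩
end

section
/- Let n ≥ 3 and let B_n be the braid group on n strands. For all 1 ≤ i < j < k ≤ n there exists ε ∈ {1, −1} such that the partial commutation relation ρ_{i,k} = ρ_{j,k}^ε * ρ_{i,j} * ρ_{j,k}^{−ε} holds among the Birman–Ko–Lee generators; in particular ρ_{i,k} is conjugate to ρ_{i,j} by a power of ρ_{j,k}. -/
/-- The conjugating word `σ_{j-1} σ_{j-2} ⋯ σ_{i+1}` (1-indexed) appearing in the
definition of the Birman--Ko--Lee generators. -/
def bklWord (n i j : ℕ) : BraidGroup n :=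
  ((List.range (j - i - 1)).map fun t => braidGen n (j - 1 - t)).prod

/-- The Birman--Ko--Lee generator `ρ_{i,j} = (σ_{j-1} ⋯ σ_{i+1}) σ_i (σ_{j-1} ⋯ σ_{i+1})⁻¹`
of the braid group `B_n` (1-indexed, `1 ≤ i < j ≤ n`).  Note `ρ_{i,i+1} = σ_i`. -/
def bklGen (n i j : ℕ) : BraidGroup n :=
  bklWord n i j * braidGen n i * (bklWord n i j)⁻¹

lemma braidRel_eq_one {n : ℕ} {r : FreeGroup (Fin (n - 1))} (h : r ∈ braidRels n) :
    (QuotientGroup.mk r : BraidGroup n) = 1 := by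
  exact (QuotientGroup.eq_one_iff r).mpr (Subgroup.subset_normalClosure h)

lemma presented_gen_comm {n : ℕ} (i j : Fin (n - 1)) (h : (i : ℕ) + 2 ≤ (j : ℕ)) :
    (PresentedGroup.of i : BraidGroup n) * PresentedGroup.of j =
      PresentedGroup.of j * PresentedGroup.of i := by
  have h1 : (QuotientGroup.mk (FreeGroup.of i * FreeGroup.of j *
      (FreeGroup.of j * FreeGroup.of i)⁻¹) : BraidGroup n) = 1 :=
    braidRel_eq_one (Or.inr ⟨i, j, h, rfl⟩)
  have h2 : (PresentedGroup.of i : BraidGroup n) * PresentedGroup.of j *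
      (PresentedGroup.of j * PresentedGroup.of i)⁻¹ = 1 := by
    exact h1
  rw [mul_inv_eq_one] at h2
  exact h2

lemma braidGen_comm {n : ℕ} {a b : ℕ} (ha : 1 ≤ a) (hab : a + 2 ≤ b) :
    Commute (braidGen n a) (braidGen n b) := by
  unfold braidGen
  by_cases h1 : a - 1 < n - 1
  · by_cases h2 : b - 1 < n - 1
    · change Commute (braidGen n a) (braidGen n b); rw [show braidGen n a = PresentedGroup.of (⟨a - 1, h1⟩ : Fin (n - 1)) from dif_pos h1, show braidGen n b = PresentedGroup.of (⟨b - 1, h2⟩ : Fin (n - 1)) from dif_pos h2]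
      exact presented_gen_comm ⟨a - 1, h1⟩ ⟨b - 1, h2⟩ (by simpa using by omega)
    · change Commute (braidGen n a) (braidGen n b); rw [show braidGen n b = 1 from dif_neg h2]; exact Commute.one_right _
  · change Commute (braidGen n a) (braidGen n b); rw [show braidGen n a = 1 from dif_neg h1]; exact Commute.one_left _

lemma bklWord_succ (n i j : ℕ) (hij : i < j) :
    bklWord n i (j + 1) = braidGen n j * bklWord n i j := by
  unfold bklWord
  have h1 : j + 1 - i - 1 = (j - i - 1) + 1 := by omega
  rw [h1, List.range_succ_eq_map, List.map_cons, List.prod_cons, List.map_map]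
  have h2 : j + 1 - 1 - 0 = j := by omega
  rw [h2]
  congr 1
  congr 1
  apply List.map_congr_left
  intro t _
  simp only [Function.comp_apply]
  congr 1
  omega

lemma bklGen_succ (n i j : ℕ) (hij : i < j) :
    bklGen n i (j + 1) = braidGen n j * bklGen n i j * (braidGen n j)⁻¹ := by
  unfold bklGen
  rw [bklWord_succ n i j hij]
  group

lemma braidGen_comm_bklGen {n : ℕ} {i j k : ℕ} (hi : 1 ≤ i) (hij : i < j)
    (hjk : j < k) : Commute (braidGen n k) (bklGen n i j) := by
  unfold bklGen
  have hw : Commute (braidGen n k) (bklWord n i j) := by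
    unfold bklWord
    apply Commute.list_prod_right
    intro x hx
    simp only [List.mem_map, List.mem_range] at hx
    obtain ⟨t, ht, rfl⟩ := hx
    exact (braidGen_comm (a := j - 1 - t) (b := k) (by omega) (by omega)).symm
  exact (hw.mul_right ((braidGen_comm hi (by omega)).symm)).mul_right hw.inv_right

lemma bkl_conj (n i j k : ℕ) (hi : 1 ≤ i) (hij : i < j) (hjk : j < k) :
    bklGen n i k = bklGen n j k * bklGen n i j * (bklGen n j k)⁻¹ := by
  induction k, hjk using Nat.le_induction with
  | base =>
    have hjj : bklGen n j (j + 1) = braidGen n j := by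
      unfold bklGen bklWord
      simp [Nat.sub_self]
    rw [hjj, bklGen_succ n i j hij]
  | succ k hk ih =>
    have hcomm : Commute (braidGen n k) (bklGen n i j) :=
      braidGen_comm_bklGen hi hij (by omega)
    rw [bklGen_succ n i k (by omega), bklGen_succ n j k (by omega), ih]
    have h2 : bklGen n i j = braidGen n k * bklGen n i j * (braidGen n k)⁻¹ := by
      rw [hcomm.eq]; group
    conv_rhs => rw [h2]
    group

/-- For `n ≥ 3` and `1 ≤ i < j < k ≤ n`, the partial commutation relation
`ρ_{i,k} = ρ_{j,k}^ε ρ_{i,j} ρ_{j,k}^{-ε}` holds for some `ε ∈ {1, -1}`. -/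
theorem bkl_partial_commutation
    (n : ℕ) (hn : 3 ≤ n) (i j k : ℕ) (hi : 1 ≤ i) (hij : i < j) (hjk : j < k)
    (hk : k ≤ n) :
    ∃ ε : ℤ, (ε = 1 ∨ ε = -1) ∧
      bklGen n i k = bklGen n j k ^ ε * bklGen n i j * (bklGen n j k ^ ε)⁻¹ := by
  refine ⟨1, Or.inl rfl, ?_⟩
  rw [zpow_one]
  exact bkl_conj n i j k hi hij hjk
end
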